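/- Under ignorability, if the propensity score satisfies 0 < e(X) < 1 almost surely and both A·Y/e(X) and (1−A)·Y/(1−e(X)) are integrable, then E[A·Y/e(X)] − E[(1−A)·Y/(1−e(X))] = E[Y₁] − E[Y₀] = τ; i.e., the average causal effect is identified by the inverse-probability-weighted functional of the observed data distribution. -/

import Mathlib

open MeasureTheory ProbabilityTheory Real MeasurableSpace
open scoped ENNReal

lemma condexp_join_of_condIndepFun
    {Ω : Type*} [mΩ : MeasurableSpace Ω] [StandardBorelSpace Ω] [Nonempty Ω]
    (μ : Measure Ω) [IsProbabilityMeasure μ]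
    {β : Type*} [mβ : MeasurableSpace β]
    {f : Ω → β} (hf : Measurable f)
    {m : MeasurableSpace Ω} (hm : m ≤ mΩ)
    {A : Ω → ℝ} (hA : Measurable[mΩ] A) (hA01 : ∀ ω, A ω = 0 ∨ A ω = 1)
    (hign : CondIndepFun m hm f A μ) :
    μ[A | m ⊔ MeasurableSpace.comap f mβ] =ᵐ[μ] μ[A | m] := by
  letI : MeasurableSpace Ω := mΩ
  have hm₂ : m ⊔ MeasurableSpace.comap f mβ ≤ mΩ := sup_le hm hf.comap_le
  have hAint : Integrable A μ := by
    refine (integrable_const (1:ℝ)).mono' hA.aestronglyMeasurable ?_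
    exact Filter.Eventually.of_forall fun ω => by rcases hA01 ω with h | h <;> simp [h]
  have heint : Integrable (μ[A|m]) μ := integrable_condExp
  -- the piSys-system generating m₂
  set piSys : Set (Set Ω) :=
    {u : Set Ω | ∃ s t, MeasurableSet[m] s ∧ MeasurableSet t ∧ u = s ∩ f ⁻¹' t} with hpdef
  have h_eq : m ⊔ MeasurableSpace.comap f mβ = MeasurableSpace.generateFrom piSys := by
    refine le_antisymm (sup_le ?_ ?_) (MeasurableSpace.generateFrom_le ?_)
    · intro u hu
      exact measurableSet_generateFrom ⟨u, Set.univ, hu, MeasurableSet.univ, by simp⟩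
    · rintro u ⟨t, ht, rfl⟩
      exact measurableSet_generateFrom ⟨Set.univ, t, MeasurableSet.univ, ht, by simp⟩
    · rintro u ⟨s, t, hsm, htm, rfl⟩
      exact ((le_sup_left : m ≤ m ⊔ MeasurableSpace.comap f mβ) s hsm).inter
        ((le_sup_right : MeasurableSpace.comap f mβ ≤ m ⊔ MeasurableSpace.comap f mβ) _ ⟨t, htm, rfl⟩)
  have h_pi : IsPiSystem piSys := by
    rintro u ⟨s₁, t₁, hs₁, ht₁, rfl⟩ v ⟨s₂, t₂, hs₂, ht₂, rfl⟩ -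
    exact ⟨s₁ ∩ s₂, t₁ ∩ t₂, hs₁.inter hs₂, ht₁.inter ht₂, by
      ext x; simp only [Set.mem_inter_iff, Set.mem_preimage]; tauto⟩
  have key : ∀ ⦃u : Set Ω⦄, MeasurableSet[m ⊔ MeasurableSpace.comap f mβ] u →
      ∫ x in u, (μ[A|m]) x ∂μ = ∫ x in u, A x ∂μ := by
    refine induction_on_inter (m := m ⊔ MeasurableSpace.comap f mβ) h_eq h_pi (by simp) ?_ ?_ ?_
    · -- basic sets
      rintro u ⟨s, t, hsm, htm, rfl⟩
      set B : Set Ω := f ⁻¹' t with hBdef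
      have hB : MeasurableSet[mΩ] B := hf htm
      set b : Ω → ℝ := Set.indicator B fun _ => (1:ℝ) with hbdef
      have hb_meas : Measurable b := measurable_const.indicator hB
      have hbint : Integrable b μ := by
        refine (integrable_const (1:ℝ)).mono' hb_meas.aestronglyMeasurable ?_
        exact Filter.Eventually.of_forall fun ω => by
          by_cases hx : ω ∈ B <;> simp [b, Set.indicator_apply, hx]
      have hbAint : Integrable (fun x => b x * A x) μ := by
        refine (integrable_const (1:ℝ)).mono' (hb_meas.mul hA).aestronglyMeasurable ?_
        exact Filter.Eventually.of_forall fun ω => by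
          rcases hA01 ω with h | h <;> by_cases hx : ω ∈ B <;>
            simp [b, Set.indicator_apply, hx, h]
      have hebint : Integrable (fun x => (μ[A|m]) x * b x) μ := by
        refine heint.norm.mono'
          (((stronglyMeasurable_condExp.mono hm).aestronglyMeasurable (μ := μ)).mul
            hb_meas.aestronglyMeasurable (μ := μ)) ?_
        exact Filter.Eventually.of_forall fun ω => by
          by_cases hx : ω ∈ B <;> simp [b, Set.indicator_apply, hx, abs_nonneg]
      -- pointwise identities
      have hbA : (fun x => b x * A x) = Set.indicator (B ∩ A ⁻¹' {1}) fun _ => (1:ℝ) := by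
        funext x
        rcases hA01 x with h | h <;> by_cases hx : x ∈ B <;>
          simp [b, Set.indicator_apply, hx, h]
      have hA_ind : (Set.indicator (A ⁻¹' {1}) fun _ => (1:ℝ)) = A := by
        funext x
        rcases hA01 x with h | h <;> simp [Set.indicator_apply, h]
      -- conditional independence factorization
      have hfact : (μ⟦f ⁻¹' t ∩ A ⁻¹' {1} | m⟧) =ᵐ[μ]
          fun ω => (μ⟦f ⁻¹' t | m⟧) ω * (μ⟦A ⁻¹' {1} | m⟧) ω :=
        ((condIndepFun_iff_condExp_inter_preimage_eq_mul (m' := m) (hm' := hm) (μ := μ) hf hA).mp hign)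
          t {1} htm (measurableSet_singleton 1)
      have hcondA : (μ⟦A ⁻¹' {1} | m⟧) = μ[A|m] := by rw [hA_ind]
      have hL : (μ[fun x => b x * A x|m]) =ᵐ[μ]
          fun ω => (μ[b|m]) ω * (μ[A|m]) ω := by
        rw [hbA]
        refine hfact.trans ?_
        rw [hcondA]
      have hR : (μ[fun x => (μ[A|m]) x * b x|m]) =ᵐ[μ]
          fun ω => (μ[A|m]) ω * (μ[b|m]) ω := by
        have := condExp_mul_of_stronglyMeasurable_left (μ := μ) (m := m)
          stronglyMeasurable_condExp (f := μ[A|m]) (g := b) hebint hbint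
        exact this
      calc ∫ x in s ∩ B, (μ[A|m]) x ∂μ
          = ∫ x in s, Set.indicator B (μ[A|m]) x ∂μ := (setIntegral_indicator hB).symm
        _ = ∫ x in s, (μ[A|m]) x * b x ∂μ := by
            refine setIntegral_congr_fun (hm s hsm) fun x _ => ?_
            by_cases hx : x ∈ B <;> simp [b, Set.indicator_apply, hx]
        _ = ∫ x in s, (μ[fun x => (μ[A|m]) x * b x|m]) x ∂μ :=
            (setIntegral_condExp hm hebint hsm).symm
        _ = ∫ x in s, (μ[A|m]) x * (μ[b|m]) x ∂μ := by
            refine setIntegral_congr_ae (hm s hsm) (hR.mono fun x hx _ => hx)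
        _ = ∫ x in s, (μ[b|m]) x * (μ[A|m]) x ∂μ := by simp_rw [mul_comm]
        _ = ∫ x in s, (μ[fun x => b x * A x|m]) x ∂μ := by
            refine (setIntegral_congr_ae (hm s hsm) (hL.mono fun x hx _ => hx)).symm
        _ = ∫ x in s, b x * A x ∂μ := setIntegral_condExp hm hbAint hsm
        _ = ∫ x in s, Set.indicator B A x ∂μ := by
            refine setIntegral_congr_fun (hm s hsm) fun x _ => ?_
            by_cases hx : x ∈ B <;> simp [b, Set.indicator_apply, hx]
        _ = ∫ x in s ∩ B, A x ∂μ := setIntegral_indicator hB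
    · -- complements
      intro u hu hInd
      have hu' : MeasurableSet[mΩ] u := hm₂ u hu
      have h1 := integral_add_compl hu' heint
      have h2 := integral_add_compl hu' hAint
      have htot : ∫ x, (μ[A|m]) x ∂μ = ∫ x, A x ∂μ := integral_condExp hm
      linarith
    · -- disjoint unions
      intro g hdisj hmeas hInd
      have hg' : ∀ i, MeasurableSet[mΩ] (g i) := fun i => hm₂ _ (hmeas i)
      have h1 := hasSum_integral_iUnion hg' hdisj heint.integrableOn
      have h2 := hasSum_integral_iUnion hg' hdisj hAint.integrableOn
      rw [← h1.tsum_eq, ← h2.tsum_eq]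
      exact tsum_congr fun i => hInd i
  haveI : SigmaFinite (μ.trim hm₂) := by infer_instance
  exact (ae_eq_condExp_of_forall_setIntegral_eq hm₂ hAint
    (fun s _ _ => integrable_condExp.integrableOn)
    (fun s hs _ => key hs)
    (((stronglyMeasurable_condExp (μ := μ) (f := A) (m := m)).mono (le_sup_left : m ≤ m ⊔ MeasurableSpace.comap f mβ)).aestronglyMeasurable (μ := μ))).symm

/-- Under ignorability, if the propensity score satisfies `0 < e(X) < 1` almost surely and both
`A·Y/e(X)` and `(1−A)·Y/(1−e(X))` are integrable, then
`E[A·Y/e(X)] − E[(1−A)·Y/(1−e(X))] = E[Y₁] − E[Y₀] = τ`: the average causal effect is identified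
by the inverse-probability-weighted functional of the observed data distribution. -/
theorem ipw_identifies_average_causal_effect
    {Ω : Type*} [MeasurableSpace Ω] [StandardBorelSpace Ω] [Nonempty Ω]
    (μ : Measure Ω) [IsProbabilityMeasure μ] {d : ℕ}
    (X : Ω → (Fin d → ℝ)) (hX : Measurable X)
    (A : Ω → ℝ) (hA : Measurable A) (hA01 : ∀ ω, A ω = 0 ∨ A ω = 1)
    (Y₀ Y₁ : Ω → ℝ) (hY₀meas : Measurable Y₀) (hY₁meas : Measurable Y₁)
    (hY₀ : Integrable Y₀ μ) (hY₁ : Integrable Y₁ μ)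
    (Y : Ω → ℝ) (hY : Y = fun ω => A ω * Y₁ ω + (1 - A ω) * Y₀ ω)
    (hign : CondIndepFun (MeasurableSpace.comap X inferInstance) hX.comap_le
      (fun ω => (Y₀ ω, Y₁ ω)) A μ)
    (e : Ω → ℝ) (he : e = μ[A | MeasurableSpace.comap X inferInstance])
    (he01 : ∀ᵐ ω ∂μ, 0 < e ω ∧ e ω < 1)
    (hint₁ : Integrable (fun ω => A ω * Y ω / e ω) μ)
    (hint₀ : Integrable (fun ω => (1 - A ω) * Y ω / (1 - e ω)) μ)
    (τ : ℝ) (hτ : τ = ∫ ω, Y₁ ω ∂μ - ∫ ω, Y₀ ω ∂μ) :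
    (∫ ω, A ω * Y ω / e ω ∂μ) - ∫ ω, (1 - A ω) * Y ω / (1 - e ω) ∂μ = τ := by
  have hf : Measurable fun ω => (Y₀ ω, Y₁ ω) := hY₀meas.prodMk hY₁meas
  have hK : μ[A | MeasurableSpace.comap X inferInstance ⊔
      MeasurableSpace.comap (fun ω => (Y₀ ω, Y₁ ω)) inferInstance] =ᵐ[μ] e := by
    rw [he]
    exact condexp_join_of_condIndepFun μ hf hX.comap_le hA hA01 hign
  have hm₂ : MeasurableSpace.comap X inferInstance ⊔
      MeasurableSpace.comap (fun ω => (Y₀ ω, Y₁ ω)) inferInstance ≤ ‹MeasurableSpace Ω› :=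
    sup_le hX.comap_le hf.comap_le
  have hfm₂ : Measurable[MeasurableSpace.comap X inferInstance ⊔
      MeasurableSpace.comap (fun ω => (Y₀ ω, Y₁ ω)) inferInstance] fun ω => (Y₀ ω, Y₁ ω) :=
    Measurable.of_comap_le le_sup_right
  have hY₁m₂ : Measurable[MeasurableSpace.comap X inferInstance ⊔
      MeasurableSpace.comap (fun ω => (Y₀ ω, Y₁ ω)) inferInstance] Y₁ :=
    measurable_snd.comp hfm₂
  have hY₀m₂ : Measurable[MeasurableSpace.comap X inferInstance ⊔
      MeasurableSpace.comap (fun ω => (Y₀ ω, Y₁ ω)) inferInstance] Y₀ :=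
    measurable_fst.comp hfm₂
  have he_sm : StronglyMeasurable[MeasurableSpace.comap X inferInstance] e :=
    he ▸ stronglyMeasurable_condExp
  have he_sm₂ : StronglyMeasurable[MeasurableSpace.comap X inferInstance ⊔
      MeasurableSpace.comap (fun ω => (Y₀ ω, Y₁ ω)) inferInstance] e :=
    he_sm.mono le_sup_left
  have hg₁sm : StronglyMeasurable[MeasurableSpace.comap X inferInstance ⊔
      MeasurableSpace.comap (fun ω => (Y₀ ω, Y₁ ω)) inferInstance]
      ((fun ω => Y₁ ω / e ω) : Ω → ℝ) :=
    (hY₁m₂.div he_sm₂.measurable).stronglyMeasurable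
  have hg₀sm : StronglyMeasurable[MeasurableSpace.comap X inferInstance ⊔
      MeasurableSpace.comap (fun ω => (Y₀ ω, Y₁ ω)) inferInstance]
      ((fun ω => Y₀ ω / (1 - e ω)) : Ω → ℝ) :=
    (hY₀m₂.div (measurable_const.sub he_sm₂.measurable)).stronglyMeasurable
  have hAint : Integrable A μ :=
    (integrable_const (1:ℝ)).mono' hA.aestronglyMeasurable
      (Filter.Eventually.of_forall fun ω => by rcases hA01 ω with h | h <;> simp [h])
  have hA'int : Integrable (fun ω => 1 - A ω) μ := (integrable_const 1).sub hAint
  have heq₁ : (fun ω => A ω * Y ω / e ω) = (fun ω => Y₁ ω / e ω) * A := by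
    funext ω
    rcases hA01 ω with h | h <;> simp [hY, h]
  have heq₀ : (fun ω => (1 - A ω) * Y ω / (1 - e ω)) =
      (fun ω => Y₀ ω / (1 - e ω)) * (fun ω => 1 - A ω) := by
    funext ω
    rcases hA01 ω with h | h <;> simp [hY, h]
  have hint₁' : Integrable ((fun ω => Y₁ ω / e ω) * A) μ := heq₁ ▸ hint₁
  have hint₀' : Integrable ((fun ω => Y₀ ω / (1 - e ω)) * fun ω => 1 - A ω) μ := heq₀ ▸ hint₀
  have P1 := condExp_mul_of_stronglyMeasurable_left (μ := μ) hg₁sm hint₁' hAint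
  have P0 := condExp_mul_of_stronglyMeasurable_left (μ := μ) hg₀sm hint₀' hA'int
  have hA'ce : μ[(fun ω => 1 - A ω) | MeasurableSpace.comap X inferInstance ⊔
      MeasurableSpace.comap (fun ω => (Y₀ ω, Y₁ ω)) inferInstance] =ᵐ[μ]
      fun ω => 1 - e ω := by
    have h1 : ((fun ω => 1 - A ω) : Ω → ℝ) = (fun _ => (1:ℝ)) - A := rfl
    rw [h1]
    refine (condExp_sub (integrable_const 1) hAint _).trans ?_
    have h2 := condExp_const hm₂ (1:ℝ) (μ := μ)
    filter_upwards [hK] with ω hω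
    simp only [Pi.sub_apply, h2, hω]
  have E1 : ∫ ω, A ω * Y ω / e ω ∂μ = ∫ ω, Y₁ ω ∂μ := by
    rw [heq₁, ← integral_condExp hm₂]
    refine integral_congr_ae ?_
    filter_upwards [P1, hK, he01] with ω h1 h2 h3
    rw [h1, Pi.mul_apply, h2, div_mul_cancel₀ _ h3.1.ne']
  have E0 : ∫ ω, (1 - A ω) * Y ω / (1 - e ω) ∂μ = ∫ ω, Y₀ ω ∂μ := by
    rw [heq₀, ← integral_condExp hm₂]
    refine integral_congr_ae ?_
    filter_upwards [P0, hA'ce, he01] with ω h1 h2 h3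
    rw [h1, Pi.mul_apply, h2, div_mul_cancel₀ _ (sub_ne_zero_of_ne (ne_of_gt h3.2))]
  rw [E1, E0, hτ]
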